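/- The fixed point of the fluid equations is unique and equals (q₁*, q₂*, δ₀*, δ₁*) = (κ+λ, κ, 1-λ-κ, 0) when κ < 1-λ: that is, the system λ·p₀ = y₁ (arrival-departure balance at busy servers), μ·u = ξ' (idle-on/off balance), ξ' = ν·δ₁ (setup balance), q_i = κ for i ≥ 2, with p₀ as defined (p₀ = 1 if u > 0, else min{(δ₁ν + y₁)/λ, 1}), u = 1 - q₁ - δ₀ - δ₁ ≥ 0, and all variables in [0,1] with q₁ ≥ q₂ ≥ κ, has the unique solution δ₁ = 0, u = 0, q₁ = κ+λ, q₂ = κ, δ₀ = 1-λ-κ. -/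
import Mathlib


/-- uniqueness of the fluid fixed point for `κ < 1-λ`. The equilibrium
conditions `λ p₀ = q₁ - q₂`, `μ u = λ(1-p₀)1{δ₀>0}`, `λ(1-p₀)1{δ₀>0} = ν δ₁`,
`q₂ = κ`, with `p₀ = 1` if `u > 0` and `p₀ = min((δ₁ν + q₁ - q₂)/λ, 1)` if `u = 0`,
`u = 1 - q₁ - δ₀ - δ₁ ≥ 0`, force the unique solution
`δ₁ = 0`, `u = 0`, `q₁ = κ+λ`, `q₂ = κ`, `δ₀ = 1-λ-κ`. -/
theorem fluid_fixed_point_unique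
    (lam μ ν κ q₁ q₂ δ₀ δ₁ u p₀ : ℝ)
    (hlam0 : 0 < lam) (hlam1 : lam < 1) (hμ : 0 < μ) (hν : 0 < ν)
    (hκ0 : 0 ≤ κ) (hκ : κ < 1 - lam)
    (hq₂κ : κ ≤ q₂) (hq : q₂ ≤ q₁) (hq₁ : q₁ ≤ 1)
    (hδ₀0 : 0 ≤ δ₀) (hδ₀1 : δ₀ ≤ 1) (hδ₁0 : 0 ≤ δ₁) (hδ₁1 : δ₁ ≤ 1)
    (hudef : u = 1 - q₁ - δ₀ - δ₁) (hu : 0 ≤ u)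
    (hq₂ : q₂ = κ)
    (hp₀ : p₀ = if 0 < u then 1 else min ((δ₁ * ν + (q₁ - q₂)) / lam) 1)
    (heq1 : lam * p₀ = q₁ - q₂)
    (heq2 : μ * u = lam * (1 - p₀) * (if 0 < δ₀ then 1 else 0))
    (heq3 : lam * (1 - p₀) * (if 0 < δ₀ then 1 else 0) = ν * δ₁) :
    δ₁ = 0 ∧ u = 0 ∧ q₁ = κ + lam ∧ q₂ = κ ∧ δ₀ = 1 - lam - κ := by
  have hu0 : u = 0 := by
    by_contra h
    have hupos : 0 < u := lt_of_le_of_ne hu (Ne.symm h)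
    rw [if_pos hupos] at hp₀
    subst hp₀
    have : μ * u = 0 := by rw [heq2]; ring
    nlinarith
  rw [hu0] at hp₀ heq2
  simp only [lt_irrefl, if_false] at hp₀
  have hδ₁ : δ₁ = 0 := by
    have : ν * δ₁ = 0 := by rw [← heq3, ← heq2]; ring
    nlinarith
  subst hδ₁ hq₂
  simp only [zero_mul, zero_add] at hp₀
  have hp1 : p₀ = 1 := by
    rcases le_or_gt 1 ((q₁ - q₂) / lam) with hc | hc
    · rw [hp₀, min_eq_right hc]
    · have hp : p₀ = (q₁ - q₂) / lam := by rw [hp₀, min_eq_left hc.le]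
      by_cases hd : 0 < δ₀
      · rw [if_pos hd, mul_one, mul_zero] at heq3
        have h1 : 1 - p₀ = 0 := by
          rcases mul_eq_zero.mp heq3 with h | h
          · exact absurd h hlam0.ne'
          · exact h
        linarith
      · have hd0 : δ₀ = 0 := le_antisymm (not_lt.mp hd) hδ₀0
        have hq1 : q₁ = 1 := by rw [hd0] at hudef; linarith
        rw [hq1, div_lt_iff₀ hlam0] at hc
        linarith
  refine ⟨rfl, hu0, ?_, rfl, ?_⟩
  · rw [hp1] at heq1; linarith
  · rw [hp1] at heq1; rw [hu0] at hudef; linarith
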